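/- Let X be a q-concave Banach function space (with concavity constant 1) for some q ∈ [1,∞), and suppose M is restricted weak type bounded on X: there is C such that λ‖χ_{{Mχ_E > λ}}‖_X ≤ C‖χ_E‖_X for all measurable E and λ > 0. Let Q be a cube and 𝓕 ⊂ 𝓓(Q) a (1/2)-sparse family with generations 𝓕_k. Then with α = (1 − (2C)^{-q})^{1/q} < 1 one has ‖Σ_{P∈𝓕_k} χ_P‖_X ≤ α^k ‖χ_Q‖_X for all k, and consequently ‖Σ_{P∈𝓕} χ_P‖_X ≤ (1−α)^{-1}‖χ_Q‖_X up to the quasi-norm constant. -/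

import Mathlib

open MeasureTheory Set ENNReal

noncomputable section

def IsCube {n : ℕ} (Q : Set (Fin n → ℝ)) : Prop :=
  ∃ (a : Fin n → ℝ) (r : ℝ), 0 < r ∧ Q = Set.Icc a (fun i => a i + r)

/-- The Hardy–Littlewood maximal operator over cubes (of an `ℝ≥0∞`-valued function). -/
def maxOp {n : ℕ} (g : (Fin n → ℝ) → ℝ≥0∞) (x : Fin n → ℝ) : ℝ≥0∞ :=
  ⨆ (Q : Set (Fin n → ℝ)) (_ : IsCube Q) (_ : x ∈ Q), (volume Q)⁻¹ * ∫⁻ y in Q, g y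

/-- Let `X` be a `q`-concave Banach function space (constant 1) on which `M` is restricted
weak type bounded with constant `C ≥ 1`. Then for a `(1/2)`-sparse family in a cube `Q`,
organized by generations `𝓕_k = {P k i}_i` (with `E_{P} ⊆ P`, `|P| ≤ 2|E_P|`, `E_P`
disjoint from the next generation), one has, with `α = (1-(2C)^{-q})^{1/q} < 1`,
`‖Σ_{P ∈ 𝓕_k} χ_P‖_X ≤ α^k ‖χ_Q‖_X` and `‖Σ_{P ∈ 𝓕} χ_P‖_X ≤ (1-α)⁻¹ ‖χ_Q‖_X`. -/
theorem statement10 {n : ℕ}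
    (NX : ((Fin n → ℝ) → ℝ) → ℝ≥0∞)
    (hmono : ∀ f g, (∀ x, |f x| ≤ |g x|) → NX f ≤ NX g)
    (hsubadd : ∀ f : ℕ → (Fin n → ℝ) → ℝ, (∀ k x, 0 ≤ f k x) →
      NX (fun x => ∑' k, f k x) ≤ ∑' k, NX (f k))
    (q : ℝ) (hq : 1 ≤ q)
    (hconc : ∀ (m : ℕ) (f : Fin m → (Fin n → ℝ) → ℝ),
      (∑ i, NX (f i) ^ q) ^ (1 / q) ≤ NX (fun x => (∑ i, |f i x| ^ q) ^ (1 / q)))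
    (C : ℝ) (hC : 1 ≤ C)
    (hweak : ∀ E : Set (Fin n → ℝ), MeasurableSet E → ∀ l : ℝ, 0 < l →
      ENNReal.ofReal l *
          NX ({x | ENNReal.ofReal l < maxOp (E.indicator fun _ => (1 : ℝ≥0∞)) x}.indicator
            fun _ => (1 : ℝ))
        ≤ ENNReal.ofReal C * NX (E.indicator fun _ => (1 : ℝ)))
    (Q : Set (Fin n → ℝ)) (hQ : IsCube Q)
    (P E : ℕ → ℕ → Set (Fin n → ℝ))
    (hPcube : ∀ k i, IsCube (P k i) ∨ P k i = ∅)
    (hPQ : ∀ k i, P k i ⊆ Q)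
    (hgen_disj : ∀ k, Pairwise fun i j => Disjoint (P k i) (P k j))
    (hnest : ∀ k, (⋃ i, P (k + 1) i) ⊆ ⋃ i, P k i)
    (hEsub : ∀ k i, E k i ⊆ P k i)
    (hEmeas : ∀ k i, MeasurableSet (E k i))
    (hEdisj : ∀ k i, Disjoint (E k i) (⋃ j, P (k + 1) j))
    (hsparse : ∀ k i, volume (P k i) ≤ 2 * volume (E k i)) :
    (∀ k, NX (fun x => ∑' i, (P k i).indicator (fun _ => (1 : ℝ)) x)
        ≤ ENNReal.ofReal ((1 - (2 * C) ^ (-q)) ^ (1 / q)) ^ k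
            * NX (Q.indicator fun _ => (1 : ℝ))) ∧
      NX (fun x => ∑' (k : ℕ) (i : ℕ), (P k i).indicator (fun _ => (1 : ℝ)) x)
        ≤ (1 - ENNReal.ofReal ((1 - (2 * C) ^ (-q)) ^ (1 / q)))⁻¹
            * NX (Q.indicator fun _ => (1 : ℝ)) := by
  classical
  have hq0 : (0:ℝ) < q := lt_of_lt_of_le one_pos hq
  have hqne : q ≠ 0 := ne_of_gt hq0
  have h2C : (1:ℝ) < 2 * C := by nlinarith
  set β : ℝ := (2 * C) ^ (-q) with hβ
  have hβpos : 0 < β := Real.rpow_pos_of_pos (by linarith) _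
  have hβlt : β < 1 := Real.rpow_lt_one_of_one_lt_of_neg h2C (by linarith)
  set αr : ℝ := (1 - β) ^ (1 / q) with hαr
  have hαrpos : 0 < αr := Real.rpow_pos_of_pos (by linarith) _
  set α : ℝ≥0∞ := ENNReal.ofReal αr with hα
  have hα0 : α ≠ 0 := by
    simp only [hα, ne_eq, ENNReal.ofReal_eq_zero, not_le]; linarith
  set Ω : ℕ → Set (Fin n → ℝ) := fun k => ⋃ i, P k i with hΩ
  have hΩQ : ∀ k, Ω k ⊆ Q := fun k => iUnion_subset (hPQ k)
  have hmono' : ∀ s t : Set (Fin n → ℝ), s ⊆ t →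
      NX (s.indicator fun _ => (1:ℝ)) ≤ NX (t.indicator fun _ => (1:ℝ)) := by
    intro s t hst
    refine hmono _ _ fun x => ?_
    by_cases hx : x ∈ s
    · rw [indicator_of_mem hx, indicator_of_mem (hst hx)]
    · rw [indicator_of_notMem hx, abs_zero]; exact abs_nonneg _
  -- tsum of indicators of pairwise disjoint sets
  have hFk : ∀ k, (fun x => ∑' i, (P k i).indicator (fun _ => (1:ℝ)) x)
      = (Ω k).indicator (fun _ => (1:ℝ)) := by
    intro k
    funext x
    by_cases hx : x ∈ Ω k
    · obtain ⟨i0, hi0⟩ := mem_iUnion.1 hx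
      rw [tsum_eq_single i0]
      · rw [indicator_of_mem hi0, indicator_of_mem hx]
      · intro j hj
        have hxj : x ∉ P k j := fun hxj => (hgen_disj k hj).ne_of_mem hxj hi0 rfl
        rw [indicator_of_notMem hxj]
    · have h1 : ∀ i, x ∉ P k i := fun i hi => hx (mem_iUnion.2 ⟨i, hi⟩)
      have hz : ∀ i, (P k i).indicator (fun _ => (1:ℝ)) x = 0 :=
        fun i => indicator_of_notMem (h1 i) _
      simp only [indicator_of_notMem hx, hz, tsum_zero]
  by_cases hfin : NX (Q.indicator fun _ => (1:ℝ)) = ⊤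
  · constructor
    · intro k
      rw [hfin, ENNReal.mul_top (pow_ne_zero k hα0)]
      exact le_top
    · rw [hfin, ENNReal.mul_top (by
        simp only [ne_eq, ENNReal.inv_eq_zero]
        exact (tsub_le_self.trans_lt one_lt_top).ne)]
      exact le_top
  -- main case
  have step : ∀ k, NX ((Ω (k+1)).indicator fun _ => (1:ℝ))
      ≤ α * NX ((Ω k).indicator fun _ => (1:ℝ)) := by
    intro k
    set Ek : Set (Fin n → ℝ) := ⋃ i, E k i with hEk
    have hEkmeas : MeasurableSet Ek := MeasurableSet.iUnion (hEmeas k)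
    have hEkΩ : Ek ⊆ Ω k := iUnion_subset fun i => (hEsub k i).trans (subset_iUnion _ i)
    set A := NX (Ek.indicator fun _ => (1:ℝ)) with hA
    set B := NX ((Ω (k+1)).indicator fun _ => (1:ℝ)) with hB
    set D := NX ((Ω k).indicator fun _ => (1:ℝ)) with hD
    have hDQ : D ≤ NX (Q.indicator fun _ => (1:ℝ)) := hmono' _ _ (hΩQ k)
    have hDfin : D ≠ ⊤ := (hDQ.trans_lt (lt_top_iff_ne_top.2 hfin)).ne
    have hAD : A ≤ D := hmono' _ _ hEkΩ
    have hAfin : A ≠ ⊤ := (hAD.trans_lt (lt_top_iff_ne_top.2 hDfin)).ne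
    -- weak type estimate for l < 1/2
    have hlev : ∀ l : ℝ, 0 < l → l < 1/2 → ENNReal.ofReal l * D ≤ ENNReal.ofReal C * A := by
      intro l hl0 hl
      have hsub : Ω k ⊆ {x | ENNReal.ofReal l <
          maxOp (Ek.indicator fun _ => (1 : ℝ≥0∞)) x} := by
        intro x hx
        obtain ⟨i, hxi⟩ := mem_iUnion.1 hx
        rcases hPcube k i with hcube | hemp
        swap
        · rw [hemp] at hxi; exact absurd hxi (notMem_empty x)
        obtain ⟨a, r, hr, hP⟩ := hcube
        have hvol : volume (P k i) = ENNReal.ofReal r ^ n := by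
          rw [hP, Real.volume_Icc_pi]
          simp
        have hv0 : volume (P k i) ≠ 0 := by
          rw [hvol]
          exact pow_ne_zero _ (by simp [ENNReal.ofReal_eq_zero]; linarith)
        have hvtop : volume (P k i) ≠ ⊤ := by
          rw [hvol]; exact ENNReal.pow_ne_top ENNReal.ofReal_ne_top
        have hint : ∫⁻ y in P k i, Ek.indicator (fun _ => (1 : ℝ≥0∞)) y
            = volume (Ek ∩ P k i) := by
          rw [MeasureTheory.lintegral_indicator hEkmeas, setLIntegral_one,
            Measure.restrict_apply hEkmeas]
        have hEsub2 : E k i ⊆ Ek ∩ P k i :=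
          subset_inter (subset_iUnion _ i) (hEsub k i)
        have hhalf : volume (P k i) / 2 ≤ volume (Ek ∩ P k i) :=
          le_trans (ENNReal.div_le_of_le_mul (by rw [mul_comm]; exact hsparse k i))
            (measure_mono hEsub2)
        have hkey : (2:ℝ≥0∞)⁻¹ ≤ (volume (P k i))⁻¹ * ∫⁻ y in P k i,
            Ek.indicator (fun _ => (1 : ℝ≥0∞)) y := by
          rw [hint]
          calc (2:ℝ≥0∞)⁻¹ = (volume (P k i))⁻¹ * (volume (P k i) / 2) := by
                rw [div_eq_mul_inv, ← mul_assoc, ENNReal.inv_mul_cancel hv0 hvtop, one_mul]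
          _ ≤ (volume (P k i))⁻¹ * volume (Ek ∩ P k i) := mul_le_mul_right hhalf _
        have hmax : (2:ℝ≥0∞)⁻¹ ≤ maxOp (Ek.indicator fun _ => (1 : ℝ≥0∞)) x := by
          refine hkey.trans ?_
          exact le_iSup_of_le (P k i) (le_iSup_of_le ⟨a, r, hr, hP⟩ (le_iSup_of_le hxi le_rfl))
        have hl2 : ENNReal.ofReal l < 2⁻¹ := by
          have h12 : ENNReal.ofReal (1/2 : ℝ) = 2⁻¹ := by
            rw [one_div, ENNReal.ofReal_inv_of_pos (by norm_num)]
            norm_num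
          rw [← h12]
          exact (ENNReal.ofReal_lt_ofReal_iff (by norm_num)).2 hl
        exact lt_of_lt_of_le hl2 hmax
      calc ENNReal.ofReal l * D
          ≤ ENNReal.ofReal l * NX ({x | ENNReal.ofReal l <
              maxOp (Ek.indicator fun _ => (1 : ℝ≥0∞)) x}.indicator fun _ => (1:ℝ)) :=
            mul_le_mul_right (hmono' _ _ hsub) _
        _ ≤ ENNReal.ofReal C * A := hweak Ek hEkmeas l hl0
    -- pass to the limit l → 1/2
    have hhalf : ENNReal.ofReal (1/2 : ℝ) * D ≤ ENNReal.ofReal C * A := by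
      have htt : Filter.Tendsto (fun m : ℕ => (1/2 - 1/(m+1) : ℝ)) Filter.atTop
          (nhds (1/2 : ℝ)) := by
        have h0 := tendsto_one_div_add_atTop_nhds_zero_nat (𝕜 := ℝ)
        have := Filter.Tendsto.const_sub (1/2 : ℝ) h0
        simpa using this
      have ht2 : Filter.Tendsto (fun m : ℕ => ENNReal.ofReal (1/2 - 1/(m+1) : ℝ) * D)
          Filter.atTop (nhds (ENNReal.ofReal (1/2 : ℝ) * D)) :=
        ENNReal.Tendsto.mul_const (ENNReal.tendsto_ofReal htt) (Or.inr hDfin)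
      refine le_of_tendsto ht2 ?_
      filter_upwards [Filter.eventually_atTop.2 ⟨2, fun m hm => hm⟩] with m hm
      have hm3 : (3:ℝ) ≤ (m:ℝ) + 1 := by
        have : (2:ℝ) ≤ (m:ℝ) := by exact_mod_cast hm
        linarith
      have h1m : (0:ℝ) < 1/((m:ℝ)+1) := by positivity
      have h1m' : 1/((m:ℝ)+1) ≤ 1/3 := by
        apply one_div_le_one_div_of_le <;> linarith
      exact hlev _ (by linarith) (by linarith)
    -- hence D ≤ (2C) * A
    have hDCA : D ≤ ENNReal.ofReal (2*C) * A := by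
      have h1 := mul_le_mul_right hhalf (ENNReal.ofReal 2)
      rw [← mul_assoc, ← ENNReal.ofReal_mul (by norm_num : (0:ℝ) ≤ 2)] at h1
      norm_num at h1
      rw [ENNReal.ofReal_mul (by norm_num : (0:ℝ) ≤ 2), mul_assoc, ENNReal.ofReal_ofNat]
      exact h1
    -- q-concavity for the pair (Ek, Ω(k+1))
    have hc := hconc 2 ![Ek.indicator (fun _ => (1:ℝ)), (Ω (k+1)).indicator (fun _ => (1:ℝ))]
    simp only [Fin.sum_univ_two, Matrix.cons_val_zero, Matrix.cons_val_one,
      Matrix.head_cons] at hc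
    have hpt : ∀ x, |(|Ek.indicator (fun _ => (1:ℝ)) x| ^ q
        + |(Ω (k+1)).indicator (fun _ => (1:ℝ)) x| ^ q) ^ (1/q)|
        ≤ |(Ω k).indicator (fun _ => (1:ℝ)) x| := by
      intro x
      by_cases h1 : x ∈ Ek
      · obtain ⟨i, hi⟩ := mem_iUnion.1 h1
        have h2 : x ∉ Ω (k+1) := fun hx2 => (hEdisj k i).ne_of_mem hi hx2 rfl
        rw [indicator_of_mem h1, indicator_of_notMem h2, indicator_of_mem (hEkΩ h1),
          abs_one, abs_zero, Real.one_rpow, Real.zero_rpow hqne, add_zero, Real.one_rpow,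
          abs_one]
      · by_cases h2 : x ∈ Ω (k+1)
        · rw [indicator_of_notMem h1, indicator_of_mem h2, indicator_of_mem (hnest k h2),
            abs_zero, abs_one, Real.zero_rpow hqne, Real.one_rpow, zero_add, Real.one_rpow,
            abs_one]
        · rw [indicator_of_notMem h1, indicator_of_notMem h2, abs_zero,
            Real.zero_rpow hqne, add_zero, Real.zero_rpow (one_div_ne_zero hqne), abs_zero]
          exact abs_nonneg _
    have hcD : (A ^ q + B ^ q) ^ (1/q) ≤ D := hc.trans (hmono _ _ hpt)
    -- raise to the power q
    have h3 : A ^ q + B ^ q ≤ D ^ q := by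
      have h4 := ENNReal.rpow_le_rpow hcD hq0.le
      rwa [← ENNReal.rpow_mul, one_div, inv_mul_cancel₀ hqne, ENNReal.rpow_one] at h4
    have hDqfin : D ^ q ≠ ⊤ := ENNReal.rpow_ne_top_of_nonneg hq0.le hDfin
    have hAqfin : A ^ q ≠ ⊤ := ENNReal.rpow_ne_top_of_nonneg hq0.le hAfin
    -- A^q ≥ β D^q
    have hq_le : ENNReal.ofReal β * D ^ q ≤ A ^ q := by
      have h5 : D ^ q ≤ (ENNReal.ofReal (2*C) * A) ^ q := ENNReal.rpow_le_rpow hDCA hq0.le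
      rw [ENNReal.mul_rpow_of_nonneg _ _ hq0.le] at h5
      calc ENNReal.ofReal β * D ^ q
          ≤ ENNReal.ofReal β * (ENNReal.ofReal (2*C) ^ q * A ^ q) := mul_le_mul_right h5 _
        _ = (ENNReal.ofReal β * ENNReal.ofReal (2*C) ^ q) * A ^ q := by ring
        _ = A ^ q := by
            rw [ENNReal.ofReal_rpow_of_pos (by linarith : (0:ℝ) < 2*C),
              ← ENNReal.ofReal_mul hβpos.le]
            have hβ1 : β * (2*C) ^ q = 1 := by
              rw [hβ, ← Real.rpow_add (by linarith : (0:ℝ) < 2*C)]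
              simp
            rw [hβ1, ENNReal.ofReal_one, one_mul]
    have h6 : B ^ q ≤ ENNReal.ofReal (1 - β) * D ^ q := by
      have h7 : B ^ q ≤ D ^ q - A ^ q := ENNReal.le_sub_of_add_le_left hAqfin h3
      calc B ^ q ≤ D ^ q - A ^ q := h7
        _ ≤ D ^ q - ENNReal.ofReal β * D ^ q := tsub_le_tsub_left hq_le _
        _ = (1 - ENNReal.ofReal β) * D ^ q := by
            rw [ENNReal.sub_mul (fun _ _ => hDqfin), one_mul]
        _ = ENNReal.ofReal (1 - β) * D ^ q := by
            rw [ENNReal.ofReal_sub 1 hβpos.le, ENNReal.ofReal_one]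
    -- take q-th roots
    have e1 : (B ^ q) ^ (1/q) = B := by
      rw [← ENNReal.rpow_mul, mul_one_div, div_self hqne, ENNReal.rpow_one]
    have e2 : (ENNReal.ofReal (1 - β) * D ^ q) ^ (1/q) = α * D := by
      rw [ENNReal.mul_rpow_of_nonneg _ _ (by positivity : (0:ℝ) ≤ 1/q),
        ← ENNReal.rpow_mul, mul_one_div, div_self hqne, ENNReal.rpow_one,
        ENNReal.ofReal_rpow_of_pos (by linarith : (0:ℝ) < 1 - β)]
    calc B = (B ^ q) ^ (1/q) := e1.symm
      _ ≤ (ENNReal.ofReal (1 - β) * D ^ q) ^ (1/q) :=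
          ENNReal.rpow_le_rpow h6 (by positivity)
      _ = α * D := e2
  -- iterate
  have hDk : ∀ k, NX ((Ω k).indicator fun _ => (1:ℝ))
      ≤ α ^ k * NX (Q.indicator fun _ => (1:ℝ)) := by
    intro k
    induction k with
    | zero => simpa using hmono' _ _ (hΩQ 0)
    | succ k ih =>
      calc NX ((Ω (k+1)).indicator fun _ => (1:ℝ))
          ≤ α * NX ((Ω k).indicator fun _ => (1:ℝ)) := step k
        _ ≤ α * (α ^ k * NX (Q.indicator fun _ => (1:ℝ))) := mul_le_mul_right ih _
        _ = α ^ (k+1) * NX (Q.indicator fun _ => (1:ℝ)) := by ring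
  constructor
  · intro k
    rw [hFk k]
    exact hDk k
  · have hsum := hsubadd (fun k x => ∑' i, (P k i).indicator (fun _ => (1:ℝ)) x)
      (fun k x => tsum_nonneg (fun i => Set.indicator_nonneg (fun _ _ => zero_le_one) x))
    refine hsum.trans ?_
    calc ∑' k, NX (fun x => ∑' i, (P k i).indicator (fun _ => (1:ℝ)) x)
        ≤ ∑' k, α ^ k * NX (Q.indicator fun _ => (1:ℝ)) :=
          ENNReal.tsum_le_tsum (fun k => by rw [hFk k]; exact hDk k)
      _ = (∑' k : ℕ, α ^ k) * NX (Q.indicator fun _ => (1:ℝ)) := ENNReal.tsum_mul_right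
      _ = (1 - α)⁻¹ * NX (Q.indicator fun _ => (1:ℝ)) := by rw [ENNReal.tsum_geometric]
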